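/- The map T(x,y) = (y, κ(x,y)·y − x), where κ(x,y) = ⌊(1+x)/y⌋, maps the triangle T = {(x,y) ∈ (0,1]² : x + y > 1} bijectively onto itself and preserves two-dimensional Lebesgue measure. -/

import Mathlib

open MeasureTheory

/-- The Farey triangle `{(x,y) ∈ (0,1]² : x + y > 1}`. -/
def fareyTriangle : Set (ℝ × ℝ) :=
  {p | p.1 ∈ Set.Ioc (0:ℝ) 1 ∧ p.2 ∈ Set.Ioc (0:ℝ) 1 ∧ 1 < p.1 + p.2}

/-- The BCZ transformation `T(x,y) = (y, ⌊(1+x)/y⌋ y - x)`. -/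
noncomputable def bczMap (p : ℝ × ℝ) : ℝ × ℝ :=
  (p.2, (⌊(1 + p.1) / p.2⌋ : ℝ) * p.2 - p.1)

/-- `𝒯_k`, the subset of the Farey triangle where `⌊(1+x)/y⌋ = k`. -/
def fareyTriangleK (k : ℤ) : Set (ℝ × ℝ) :=
  {p ∈ fareyTriangle | ⌊(1 + p.1) / p.2⌋ = k}

/-- Candidate inverse of the BCZ map. -/
noncomputable def bczInv (q : ℝ × ℝ) : ℝ × ℝ :=
  ((⌊(1 + q.2) / q.1⌋ : ℝ) * q.1 - q.2, q.1)

lemma bczInv_eq_swap (q : ℝ × ℝ) : bczInv q = Prod.swap (bczMap (Prod.swap q)) := rfl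

lemma fareyTriangle_swap {p : ℝ × ℝ} (hp : p ∈ fareyTriangle) :
    Prod.swap p ∈ fareyTriangle := by
  obtain ⟨h1, h2, h3⟩ := hp
  exact ⟨h2, h1, by simpa [add_comm] using h3⟩

/-- Main key lemma: `T` maps the triangle into itself, with `bczInv` a left inverse. -/
lemma bcz_key {p : ℝ × ℝ} (hp : p ∈ fareyTriangle) :
    bczMap p ∈ fareyTriangle ∧ bczInv (bczMap p) = p := by
  obtain ⟨⟨hx0, hx1⟩, ⟨hy0, hy1⟩, hxy⟩ := hp
  set x := p.1
  set y := p.2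
  set k : ℤ := ⌊(1 + x) / y⌋ with hk
  have hky : (k : ℝ) * y ≤ 1 + x := by
    have := Int.floor_le ((1 + x) / y)
    calc (k : ℝ) * y ≤ ((1 + x) / y) * y := by
          exact mul_le_mul_of_nonneg_right this hy0.le
      _ = 1 + x := by field_simp
  have hky' : 1 + x < ((k : ℝ) + 1) * y := by
    have := Int.lt_floor_add_one ((1 + x) / y)
    calc 1 + x = ((1 + x) / y) * y := by field_simp
      _ < ((k : ℝ) + 1) * y := by
          exact mul_lt_mul_of_pos_right (by exact_mod_cast this) hy0
  set v : ℝ := (k : ℝ) * y - x with hv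
  have hv1 : v ≤ 1 := by simp only [hv]; linarith
  have hv0 : 1 - y < v := by simp only [hv]; nlinarith
  have hv0' : 0 < v := by linarith
  have hmem : bczMap p ∈ fareyTriangle := by
    refine ⟨⟨hy0, hy1⟩, ⟨hv0', hv1⟩, ?_⟩
    show 1 < y + v
    linarith
  refine ⟨hmem, ?_⟩
  have hfloor : ⌊(1 + v) / y⌋ = k := by
    rw [Int.floor_eq_iff]
    constructor
    · rw [le_div_iff₀ hy0]; simp only [hv]; linarith
    · rw [div_lt_iff₀ hy0]; simp only [hv]; linarith
  have h1 : bczInv (bczMap p) = ((⌊(1 + v) / y⌋ : ℝ) * y - v, y) := rfl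
  rw [h1, hfloor]
  have h2 : (k : ℝ) * y - v = x := by simp [hv]
  rw [h2]

lemma bcz_key' {q : ℝ × ℝ} (hq : q ∈ fareyTriangle) :
    bczInv q ∈ fareyTriangle ∧ bczMap (bczInv q) = q := by
  have hq' : Prod.swap q ∈ fareyTriangle := fareyTriangle_swap hq
  obtain ⟨hmem, hinv⟩ := bcz_key hq'
  constructor
  · rw [bczInv_eq_swap]; exact fareyTriangle_swap hmem
  · have : bczMap (bczInv q) = Prod.swap (bczInv (bczMap (Prod.swap q))) := by
      rw [bczInv_eq_swap]; rfl
    rw [this, hinv, Prod.swap_swap]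

lemma bcz_bijOn : Set.BijOn bczMap fareyTriangle fareyTriangle := by
  refine ⟨fun p hp => (bcz_key hp).1, ?_, ?_⟩
  · intro p hp q hq h
    have := (bcz_key hp).2
    rw [h, (bcz_key hq).2] at this
    exact this.symm
  · intro q hq
    exact ⟨bczInv q, (bcz_key' hq).1, (bcz_key' hq).2⟩

/-- The linear map underlying the BCZ map on `𝒯_k`. -/
noncomputable def bczLin (k : ℤ) : (ℝ × ℝ) ≃ₗ[ℝ] (ℝ × ℝ) :=
{ toLinearMap :=
  { toFun := fun p => (p.2, (k : ℝ) * p.2 - p.1)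
    map_add' := fun p q => by ext <;> simp <;> ring
    map_smul' := fun c p => by ext <;> simp <;> ring }
  invFun := fun q => ((k : ℝ) * q.1 - q.2, q.1)
  left_inv := fun p => by ext <;> simp
  right_inv := fun q => by ext <;> simp }

lemma bczLin_det (k : ℤ) : LinearMap.det ((bczLin k).toLinearMap) = 1 := by
  rw [← LinearMap.det_toMatrix (Module.Basis.finTwoProd ℝ), Matrix.det_fin_two]
  simp [LinearMap.toMatrix_apply, bczLin, Module.Basis.coe_finTwoProd_repr]

lemma bczLin_image_volume (k : ℤ) (s : Set (ℝ × ℝ)) :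
    volume ((bczLin k) '' s) = volume s := by
  have := Measure.addHaar_image_linearMap (volume : Measure (ℝ × ℝ))
    ((bczLin k).toLinearMap) s
  simpa [bczLin_det] using this

lemma bczLin_meas_image (k : ℤ) {s : Set (ℝ × ℝ)} (hs : MeasurableSet s) :
    MeasurableSet ((bczLin k) '' s) := by
  rw [LinearEquiv.image_eq_preimage_symm]
  exact ((bczLin k).symm.toContinuousLinearEquiv.continuous.measurable) hs

lemma measurable_floorFun : Measurable fun p : ℝ × ℝ => ⌊(1 + p.1) / p.2⌋ :=
  ((measurable_const.add measurable_fst).div measurable_snd).floor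

lemma measurableSet_fareyTriangleK (k : ℤ) : MeasurableSet (fareyTriangleK k) := by
  have hF : MeasurableSet fareyTriangle := by
    have : fareyTriangle = (Set.Ioc (0:ℝ) 1 ×ˢ Set.Ioc (0:ℝ) 1) ∩
        {p : ℝ × ℝ | 1 < p.1 + p.2} := by
      ext p; simp [fareyTriangle, Set.mem_prod, and_assoc]
    rw [this]
    exact (measurableSet_Ioc.prod measurableSet_Ioc).inter
      (measurableSet_lt measurable_const (measurable_fst.add measurable_snd))
  exact hF.inter (measurable_floorFun (measurableSet_singleton k))

/-- `T` maps the Farey triangle bijectively onto itself and preserves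
two-dimensional Lebesgue measure. -/
theorem bczMap_bijOn_measurePreserving :
    Set.BijOn bczMap fareyTriangle fareyTriangle ∧
      ∀ s ⊆ fareyTriangle, MeasurableSet s → volume (bczMap '' s) = volume s := by
  refine ⟨bcz_bijOn, ?_⟩
  intro s hsub hs
  set f : ℤ → Set (ℝ × ℝ) := fun k => s ∩ fareyTriangleK k with hf
  have hcover : s = ⋃ k, f k := by
    ext p
    constructor
    · intro hp
      exact Set.mem_iUnion.2 ⟨⌊(1 + p.1) / p.2⌋, hp, hsub hp, rfl⟩
    · intro hp
      obtain ⟨k, hk, _⟩ := Set.mem_iUnion.1 hp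
      exact hk
  have hmeas : ∀ k, MeasurableSet (f k) := fun k => hs.inter (measurableSet_fareyTriangleK k)
  have himg : ∀ k, bczMap '' (f k) = (bczLin k) '' (f k) := by
    intro k
    apply Set.image_congr
    intro p hp
    have hfl : ⌊(1 + p.1) / p.2⌋ = k := hp.2.2
    simp [bczMap, bczLin, hfl]
  have hdisjf : Pairwise (Function.onFun Disjoint f) := by
    intro i j hij
    simp only [Function.onFun, Set.disjoint_left]
    rintro p ⟨_, _, hi⟩ ⟨_, _, hj⟩
    exact hij (hi ▸ hj ▸ rfl)
  have hdisjimg : Pairwise (Function.onFun Disjoint fun k => bczMap '' (f k)) := by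
    intro i j hij
    simp only [Function.onFun, Set.disjoint_left]
    rintro q ⟨p, hp, rfl⟩ ⟨p', hp', he⟩
    have h1 : p ∈ fareyTriangle := hsub hp.1
    have h2 : p' ∈ fareyTriangle := hsub hp'.1
    have hpe : p' = p := bcz_bijOn.2.1 h2 h1 he
    subst hpe
    exact hij (hp.2.2 ▸ hp'.2.2 ▸ rfl)
  calc volume (bczMap '' s) = volume (⋃ k, bczMap '' (f k)) := by
        rw [hcover, Set.image_iUnion]
    _ = ∑' k, volume (bczMap '' (f k)) := measure_iUnion hdisjimg
        (fun k => by rw [himg k]; exact bczLin_meas_image k (hmeas k))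
    _ = ∑' k, volume (f k) := tsum_congr fun k => by rw [himg k, bczLin_image_volume]
    _ = volume (⋃ k, f k) := (measure_iUnion hdisjf hmeas).symm
    _ = volume s := by rw [← hcover]
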